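/- In U_E(λ) (char F ≠ 2, λ ∉ {0,1}, δ = 1 − λ), any two idempotents e, f satisfy ef = δe + λf. -/

import Mathlib

/-- In `U_E(λ)`, any two (nonzero) idempotents `f, g` satisfy `f g = δ f + λ g`. -/
theorem stmt3 {F A I : Type*} [Field F] [NonUnitalNonAssocRing A] [Module F A]
    [SMulCommClass F A A] [IsScalarTower F A A]
    (hchar : (2 : F) ≠ 0) (lam : F) (hl0 : lam ≠ 0) (hl1 : lam ≠ 1)
    (e : I → A) (hindep : LinearIndependent F e)
    (hspan : Submodule.span F (Set.range e) = ⊤)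
    (hmul : ∀ i j, e i * e j = (1 - lam) • e i + lam • e j)
    (f g : A) (hf : f * f = f) (hg : g * g = g) (hf0 : f ≠ 0) (hg0 : g ≠ 0) :
    f * g = (1 - lam) • f + lam • g := by
  classical
  let B : Module.Basis I F A := Module.Basis.mk hindep hspan.ge
  have hB : ∀ i, B i = e i := fun i => Module.Basis.mk_apply _ _ i
  let σ : A →ₗ[F] F := B.constr F (fun _ => (1 : F))
  have hσ : ∀ i, σ (e i) = 1 := by
    intro i
    have := B.constr_basis F (fun _ => (1 : F)) i
    rwa [hB] at this
  -- Lemma A: e i * y = ((1-lam) * σ y) • e i + lam • y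
  have lemA : ∀ i y, e i * y = ((1 - lam) * σ y) • e i + lam • y := by
    intro i y
    have : (LinearMap.mulLeft F (e i) : A →ₗ[F] A)
        = (1 - lam) • σ.smulRight (e i) + lam • LinearMap.id := by
      apply B.ext
      intro j
      simp only [hB, LinearMap.mulLeft_apply, LinearMap.add_apply, LinearMap.smul_apply,
        LinearMap.smulRight_apply, LinearMap.id_apply, hσ, hmul, one_smul, smul_smul,
        smul_assoc]
    have h := LinearMap.congr_fun this y
    simp only [LinearMap.mulLeft_apply, LinearMap.add_apply, LinearMap.smul_apply,
      LinearMap.smulRight_apply, LinearMap.id_apply, smul_smul] at h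
    exact h
  -- Lemma B: x * y = ((1-lam) * σ y) • x + (lam * σ x) • y
  have lemB : ∀ x y, x * y = ((1 - lam) * σ y) • x + (lam * σ x) • y := by
    intro x y
    have : (LinearMap.mulRight F y : A →ₗ[F] A)
        = ((1 - lam) * σ y) • LinearMap.id + σ.smulRight (lam • y) := by
      apply B.ext
      intro i
      simp only [hB, LinearMap.mulRight_apply, LinearMap.add_apply, LinearMap.smul_apply,
        LinearMap.smulRight_apply, LinearMap.id_apply, hσ, one_smul]
      rw [lemA]
    have h := LinearMap.congr_fun this x
    simp only [LinearMap.mulRight_apply, LinearMap.add_apply, LinearMap.smul_apply,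
      LinearMap.smulRight_apply, LinearMap.id_apply] at h
    rw [h, smul_smul, mul_comm (σ x) lam]
  -- idempotents have σ = 1
  have key : ∀ x : A, x * x = x → x ≠ 0 → σ x = 1 := by
    intro x hx hx0
    have h := lemB x x
    rw [hx] at h
    have hsum : (1 - lam) * σ x + lam * σ x = σ x := by ring
    rw [← add_smul, hsum] at h
    have hz : (σ x - 1) • x = 0 := by
      rw [sub_smul, one_smul, ← h, sub_self]
    rcases smul_eq_zero.mp hz with h1 | h1
    · exact sub_eq_zero.mp h1
    · exact absurd h1 hx0
  have hσf := key f hf hf0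
  have hσg := key g hg hg0
  rw [lemB f g, hσf, hσg, mul_one, mul_one]
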